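/- The function φ defined by φ(γ) = 2^{(1-γ)/2}·(γ/2)·I(γ) with I(γ) = ∫_0^∞ (s+1)^{-(γ+2)/2}(s+2)^{(γ-1)/2} ds satisfies the recursion φ(γ+2) = 1 + ((γ+1)/(2γ))·φ(γ) for all γ > 1. -/

import Mathlib

open Real MeasureTheory Set Filter Topology

lemma aux_integrable (a b : ℝ) (hab : a + b = -(3/2)) (hb : 0 ≤ b) :
    IntegrableOn (fun s : ℝ => (s + 1) ^ a * (s + 2) ^ b) (Set.Ioi 0) := by
  have ha : a ≤ 0 := by linarith
  have hcont : ContinuousOn (fun s : ℝ => (s + 1) ^ a * (s + 2) ^ b) (Set.Icc 0 1) := by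
    apply ContinuousOn.mul
    · apply ContinuousOn.rpow_const (by fun_prop)
      intro x hx; left; nlinarith [hx.1]
    · apply ContinuousOn.rpow_const (by fun_prop)
      intro x hx; left; nlinarith [hx.1]
  have h1 : IntegrableOn (fun s : ℝ => (s + 1) ^ a * (s + 2) ^ b) (Set.Ioc 0 1) :=
    (hcont.integrableOn_Icc).mono_set Set.Ioc_subset_Icc_self
  have h2 : IntegrableOn (fun s : ℝ => (s + 1) ^ a * (s + 2) ^ b) (Set.Ioi 1) := by
    apply Integrable.mono'
      ((integrableOn_Ioi_rpow_of_lt (show (-3/2 : ℝ) < -1 by norm_num) one_pos).const_mul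
        ((3 : ℝ) ^ b))
    · apply ContinuousOn.aestronglyMeasurable _ measurableSet_Ioi
      apply ContinuousOn.mul
      · apply ContinuousOn.rpow_const (by fun_prop)
        intro x hx; left; have := hx.out; nlinarith
      · apply ContinuousOn.rpow_const (by fun_prop)
        intro x hx; left; have := hx.out; nlinarith
    · filter_upwards [ae_restrict_mem measurableSet_Ioi] with s hs
      have hs1 : (1 : ℝ) < s := hs
      have h0s : (0 : ℝ) < s := by linarith
      rw [Real.norm_of_nonneg (by positivity)]
      calc (s + 1) ^ a * (s + 2) ^ b
          ≤ s ^ a * (3 * s) ^ b := by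
            apply mul_le_mul
            · exact Real.rpow_le_rpow_of_nonpos h0s (by linarith) ha
            · exact Real.rpow_le_rpow (by linarith) (by linarith) hb
            · positivity
            · positivity
        _ = 3 ^ b * s ^ (-3/2 : ℝ) := by
            rw [Real.mul_rpow (by norm_num) h0s.le]
            rw [show s ^ a * (3 ^ b * s ^ b) = 3 ^ b * (s ^ a * s ^ b) by ring,
              ← Real.rpow_add h0s, show a + b = (-3/2 : ℝ) by linarith]
  have := h1.union h2
  rwa [Set.Ioc_union_Ioi_eq_Ioi zero_le_one] at this

/-- The function `φ(γ) = 2^{(1-γ)/2}·(γ/2)·I(γ)` with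
`I(γ) = ∫_0^∞ (s+1)^{-(γ+2)/2}(s+2)^{(γ-1)/2} ds` satisfies the recursion
`φ(γ+2) = 1 + ((γ+1)/(2γ))·φ(γ)` for all `γ > 1`. -/
theorem phi_recursion (I φ : ℝ → ℝ)
    (hI : ∀ g : ℝ, I g =
      ∫ s in Set.Ioi (0 : ℝ), (s + 1) ^ (-(g + 2) / 2) * (s + 2) ^ ((g - 1) / 2))
    (hφ : ∀ g : ℝ, φ g = 2 ^ ((1 - g) / 2) * (g / 2) * I g) :
    ∀ γ : ℝ, 1 < γ → φ (γ + 2) = 1 + (γ + 1) / (2 * γ) * φ γ := by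
  intro γ hγ
  set p : ℝ := -(γ + 2) / 2 with hp
  set q : ℝ := (γ + 1) / 2 with hq
  have hq0 : 0 ≤ q := by rw [hq]; linarith
  -- the function for integration by parts
  set F : ℝ → ℝ := fun s => (s + 1) ^ p * (s + 2) ^ q with hF
  have int1 : IntegrableOn (fun s : ℝ => (s + 1) ^ (-(γ + 4) / 2) * (s + 2) ^ ((γ + 1) / 2))
      (Set.Ioi 0) := aux_integrable _ _ (by ring) (by linarith)
  have int2 : IntegrableOn (fun s : ℝ => (s + 1) ^ (-(γ + 2) / 2) * (s + 2) ^ ((γ - 1) / 2))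
      (Set.Ioi 0) := aux_integrable _ _ (by ring) (by linarith)
  have hderiv : ∀ s ∈ Set.Ioi (0 : ℝ), HasDerivAt F
      (-(γ + 2) / 2 * ((s + 1) ^ (-(γ + 4) / 2) * (s + 2) ^ ((γ + 1) / 2))
        + (γ + 1) / 2 * ((s + 1) ^ (-(γ + 2) / 2) * (s + 2) ^ ((γ - 1) / 2))) s := by
    intro s hs
    have hs0 : (0 : ℝ) < s := hs
    have h1 : HasDerivAt (fun x : ℝ => (x + 1) ^ p) (1 * p * (s + 1) ^ (p - 1)) s :=
      ((hasDerivAt_id s).add_const 1).rpow_const (Or.inl (by positivity))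
    have h2 : HasDerivAt (fun x : ℝ => (x + 2) ^ q) (1 * q * (s + 2) ^ (q - 1)) s :=
      ((hasDerivAt_id s).add_const 2).rpow_const (Or.inl (by positivity))
    have h := h1.mul h2
    refine h.congr_deriv ?_
    rw [show p - 1 = -(γ + 4) / 2 by rw [hp]; ring, show q - 1 = (γ - 1) / 2 by rw [hq]; ring,
      hp, hq]
    ring
  have hcont : ContinuousWithinAt F (Set.Ici 0) 0 := by
    apply ContinuousAt.continuousWithinAt
    apply ContinuousAt.mul
    · exact (by fun_prop : ContinuousAt (fun x : ℝ => x + 1) 0).rpow_const (by norm_num)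
    · exact (by fun_prop : ContinuousAt (fun x : ℝ => x + 2) 0).rpow_const (by norm_num)
  have htend : Tendsto F atTop (𝓝 0) := by
    apply squeeze_zero' (g := fun s : ℝ => 2 ^ q * (s + 1) ^ (-(1/2) : ℝ))
    · filter_upwards [eventually_ge_atTop (0 : ℝ)] with s hs
      have : (0:ℝ) < s + 1 := by linarith
      positivity
    · filter_upwards [eventually_ge_atTop (0 : ℝ)] with s hs
      have h01 : (0:ℝ) < s + 1 := by linarith
      calc (s + 1) ^ p * (s + 2) ^ q
          ≤ (s + 1) ^ p * (2 * (s + 1)) ^ q := by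
            apply mul_le_mul_of_nonneg_left
              (Real.rpow_le_rpow (by linarith) (by linarith) hq0) (by positivity)
        _ = 2 ^ q * (s + 1) ^ (-(1/2) : ℝ) := by
            rw [Real.mul_rpow (by norm_num) h01.le,
              show (s+1) ^ p * (2 ^ q * (s+1) ^ q) = 2 ^ q * ((s+1) ^ p * (s+1) ^ q) by ring,
              ← Real.rpow_add h01, show p + q = (-(1/2) : ℝ) by rw [hp, hq]; ring]
    · have : Tendsto (fun s : ℝ => (s + 1) ^ (-(1/2) : ℝ)) atTop (𝓝 0) :=
        (tendsto_rpow_neg_atTop (by norm_num : (0:ℝ) < 1/2)).comp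
          (tendsto_atTop_add_const_right atTop 1 tendsto_id)
      simpa using this.const_mul ((2:ℝ) ^ q)
  have hFint : IntegrableOn (fun s : ℝ =>
      -(γ + 2) / 2 * ((s + 1) ^ (-(γ + 4) / 2) * (s + 2) ^ ((γ + 1) / 2))
        + (γ + 1) / 2 * ((s + 1) ^ (-(γ + 2) / 2) * (s + 2) ^ ((γ - 1) / 2))) (Set.Ioi 0) :=
    (int1.const_mul _).add (int2.const_mul _)
  have key := integral_Ioi_of_hasDerivAt_of_tendsto hcont hderiv hFint htend
  have hF0 : F 0 = 2 ^ q := by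
    simp only [hF]; norm_num
  rw [hF0, integral_add (int1.const_mul _) (int2.const_mul _),
    integral_const_mul, integral_const_mul, zero_sub] at key
  -- rewrite the integrals as I (γ+2) and I γ
  have hI2 : I (γ + 2) = ∫ s in Set.Ioi (0:ℝ), (s + 1) ^ (-(γ + 4) / 2) * (s + 2) ^ ((γ + 1) / 2) := by
    rw [hI]; congr 1 with s
    rw [show -(γ + 2 + 2) / 2 = -(γ + 4) / 2 by ring, show (γ + 2 - 1) / 2 = (γ + 1) / 2 by ring]
  have hI1 : I γ = ∫ s in Set.Ioi (0:ℝ), (s + 1) ^ (-(γ + 2) / 2) * (s + 2) ^ ((γ - 1) / 2) :=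
    hI γ
  rw [← hI2, ← hI1] at key
  -- now do the algebra
  have hK : (γ + 2) / 2 * I (γ + 2) = 2 ^ q + (γ + 1) / 2 * I γ := by linarith
  rw [hφ, hφ]
  have c0 : (2:ℝ) ^ ((1 - (γ + 2)) / 2) * 2 ^ q = 1 := by
    rw [← Real.rpow_add two_pos, show (1 - (γ + 2)) / 2 + q = 0 by rw [hq]; ring,
      Real.rpow_zero]
  have e1 : (2:ℝ) ^ ((1 - (γ + 2)) / 2) = 2 ^ ((1 - γ) / 2) / 2 := by
    rw [show (1 - (γ + 2)) / 2 = (1 - γ) / 2 - 1 by ring, Real.rpow_sub two_pos,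
      Real.rpow_one]
  rw [mul_assoc, hK, mul_add, c0]
  congr 1
  rw [e1]
  have hγ0 : γ ≠ 0 := by linarith
  field_simp
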